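/- Let $\Gamma$ be a simple oriented acyclic graph with vertex set $\{1,\ldots,n\}$ such that $i \to j$ implies $i < j$. Then the Hecke–Kiselman monoid $\HK_\Gamma$ has exactly $2^n$ idempotents, namely the elements $e_X = x_{i_1}\cdots x_{i_j}$ for subsets $X = \{i_1 < \cdots < i_j\} \subseteq \{1,\ldots,n\}$ (with $e_\emptyset = 1$), and these $2^n$ elements are pairwise distinct. -/

import Mathlib

/-- The defining relations of the Hecke–Kiselman monoid of an oriented graph with
arrow relation `E` on `Fin n`: each generator is idempotent, non-connected generators
commute, and `x_i x_j x_i = x_j x_i x_j = x_i x_j` whenever `i → j`. -/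
def hkRel {n : ℕ} (E : Fin n → Fin n → Prop) :
    FreeMonoid (Fin n) → FreeMonoid (Fin n) → Prop := fun w₁ w₂ =>
  (∃ i, w₁ = FreeMonoid.of i * FreeMonoid.of i ∧ w₂ = FreeMonoid.of i) ∨
  (∃ i j, i ≠ j ∧ ¬ E i j ∧ ¬ E j i ∧
    w₁ = FreeMonoid.of i * FreeMonoid.of j ∧ w₂ = FreeMonoid.of j * FreeMonoid.of i) ∨
  (∃ i j, E i j ∧
    ((w₁ = FreeMonoid.of i * FreeMonoid.of j * FreeMonoid.of i ∧
      w₂ = FreeMonoid.of i * FreeMonoid.of j) ∨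
     (w₁ = FreeMonoid.of j * FreeMonoid.of i * FreeMonoid.of j ∧
      w₂ = FreeMonoid.of i * FreeMonoid.of j)))

/-- The Hecke–Kiselman monoid of the oriented graph `E`. -/
def HKmonoid {n : ℕ} (E : Fin n → Fin n → Prop) : Type := (conGen (hkRel E)).Quotient

instance {n : ℕ} (E : Fin n → Fin n → Prop) : Monoid (HKmonoid E) :=
  Con.monoid _

/-- The generator `x i` of the Hecke–Kiselman monoid. -/
def hkGen {n : ℕ} (E : Fin n → Fin n → Prop) (i : Fin n) : HKmonoid E :=
  (conGen (hkRel E)).mk' (FreeMonoid.of i)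

/-- For `X ⊆ {1,…,n}`, the element `e_X = x_{i_1} ⋯ x_{i_j}` where
`X = {i_1 < ⋯ < i_j}`; `e_∅ = 1`. -/
def hkIdemElt {n : ℕ} (E : Fin n → Fin n → Prop) (X : Finset (Fin n)) : HKmonoid E :=
  ((X.sort (· ≤ ·)).map (hkGen E)).prod

namespace HKaux

variable {n : ℕ} {E : Fin n → Fin n → Prop}

/-- product of generators along a list -/
def hkP (E : Fin n → Fin n → Prop) (l : List (Fin n)) : HKmonoid E :=
  (l.map (hkGen E)).prod

@[simp] lemma hkP_nil : hkP E ([] : List (Fin n)) = 1 := rfl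

@[simp] lemma hkP_cons (a : Fin n) (l : List (Fin n)) :
    hkP E (a :: l) = hkGen E a * hkP E l := by
  simp [hkP]

@[simp] lemma hkP_append (l l' : List (Fin n)) :
    hkP E (l ++ l') = hkP E l * hkP E l' := by
  simp [hkP]

lemma hkIdemElt_eq (X : Finset (Fin n)) : hkIdemElt E X = hkP E (X.sort (· ≤ ·)) := rfl

lemma mkrel {w₁ w₂ : FreeMonoid (Fin n)} (h : hkRel E w₁ w₂) :
    (conGen (hkRel E)).mk' w₁ = (conGen (hkRel E)).mk' w₂ :=
  (Con.eq _).mpr (ConGen.Rel.of _ _ h)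

lemma hk_sq (i : Fin n) : hkGen E i * hkGen E i = hkGen E i := by
  have h := mkrel (E := E) (Or.inl ⟨i, rfl, rfl⟩)
  simp only [map_mul] at h
  exact h

lemma hk_comm {i j : Fin n} (hne : i ≠ j) (h1 : ¬ E i j) (h2 : ¬ E j i) :
    hkGen E i * hkGen E j = hkGen E j * hkGen E i := by
  have h := mkrel (E := E) (Or.inr (Or.inl ⟨i, j, hne, h1, h2, rfl, rfl⟩))
  simp only [map_mul] at h
  exact h

lemma hk_braid1 {i j : Fin n} (h : E i j) :
    hkGen E i * hkGen E j * hkGen E i = hkGen E i * hkGen E j := by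
  have h := mkrel (E := E) (Or.inr (Or.inr ⟨i, j, h, Or.inl ⟨rfl, rfl⟩⟩))
  simp only [map_mul] at h
  exact h

lemma hk_braid2 {i j : Fin n} (h : E i j) :
    hkGen E j * hkGen E i * hkGen E j = hkGen E i * hkGen E j := by
  have h := mkrel (E := E) (Or.inr (Or.inr ⟨i, j, h, Or.inr ⟨rfl, rfl⟩⟩))
  simp only [map_mul] at h
  exact h

lemma hk_sq' (i : Fin n) (t : HKmonoid E) :
    hkGen E i * (hkGen E i * t) = hkGen E i * t := by
  rw [← mul_assoc, hk_sq]

lemma hk_comm' {i j : Fin n} (hne : i ≠ j) (h1 : ¬ E i j) (h2 : ¬ E j i) (t : HKmonoid E) :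
    hkGen E i * (hkGen E j * t) = hkGen E j * (hkGen E i * t) := by
  rw [← mul_assoc, ← mul_assoc, hk_comm hne h1 h2]

lemma hk_braid1' {i j : Fin n} (h : E i j) (t : HKmonoid E) :
    hkGen E i * (hkGen E j * (hkGen E i * t)) = hkGen E i * (hkGen E j * t) := by
  rw [← mul_assoc, ← mul_assoc, hk_braid1 h, mul_assoc]

lemma hk_braid2' {i j : Fin n} (h : E i j) (t : HKmonoid E) :
    hkGen E j * (hkGen E i * (hkGen E j * t)) = hkGen E i * (hkGen E j * t) := by
  rw [← mul_assoc, ← mul_assoc, hk_braid2 h, mul_assoc]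

section Acyclic

variable (hacyc : ∀ i j : Fin n, E i j → i < j)
include hacyc

/-- Lemma 1 (tailed form): if `i` is ≤ all letters of `l`, then
`x_i · l · x_i · t = x_i · l · t`. -/
lemma minPull (i : Fin n) :
    ∀ l : List (Fin n), (∀ k ∈ l, i ≤ k) → ∀ t : HKmonoid E,
      hkGen E i * (hkP E l * (hkGen E i * t)) = hkGen E i * (hkP E l * t) := by
  intro l
  induction l using List.reverseRecOn with
  | nil =>
    intro _ t
    simp [hk_sq' i t]
  | append_singleton l k ih =>
    intro hmem t
    have hik : i ≤ k := hmem k (by simp)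
    have hl : ∀ m ∈ l, i ≤ m := fun m hm => hmem m (by simp [hm])
    simp only [hkP_append, hkP_cons, hkP_nil, mul_one, mul_assoc]
    rcases eq_or_lt_of_le hik with heq | hlt
    · subst heq
      rw [hk_sq' i t]
    · have hki : ¬ E k i := fun h => absurd (hacyc _ _ h) (not_lt.mpr hlt.le)
      by_cases hik' : E i k
      · -- edge i → k
        rw [← ih hl (hkGen E k * (hkGen E i * t)), hk_braid1' hik' t,
          ih hl (hkGen E k * t)]
      · have hne : i ≠ k := Fin.ne_of_lt hlt
        rw [← hk_comm' hne hik' hki t, ih hl (hkGen E k * t)]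

/-- Lemma 2 (tailed form): if `j` is ≥ all letters of `l`, then
`x_j · l · x_j · t = l · x_j · t`. -/
lemma maxPush (j : Fin n) :
    ∀ l : List (Fin n), (∀ k ∈ l, k ≤ j) → ∀ t : HKmonoid E,
      hkGen E j * (hkP E l * (hkGen E j * t)) = hkP E l * (hkGen E j * t) := by
  intro l
  induction l with
  | nil =>
    intro _ t
    simp [hk_sq' j t]
  | cons k l ih =>
    intro hmem t
    have hkj : k ≤ j := hmem k (by simp)
    have hl : ∀ m ∈ l, m ≤ j := fun m hm => hmem m (by simp [hm])
    simp only [hkP_cons, mul_assoc]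
    rcases eq_or_lt_of_le hkj with heq | hlt
    · subst heq
      rw [hk_sq' k (hkP E l * (hkGen E k * t))]
    · have hjk : ¬ E j k := fun h => absurd (hacyc _ _ h) (not_lt.mpr hlt.le)
      by_cases hkj' : E k j
      · -- edge k → j
        rw [← ih hl t, hk_braid2' hkj' (hkP E l * (hkGen E j * t)), ih hl t]
      · have hne : j ≠ k := (Fin.ne_of_lt hlt).symm
        rw [hk_comm' hne hjk hkj' (hkP E l * (hkGen E j * t)), ih hl t]

/-- absorption of a single generator on the right of a strictly sorted word -/
lemma absorb_gen {s : List (Fin n)} (hs : s.Pairwise (· < ·)) {k : Fin n} (hk : k ∈ s)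
    (t : HKmonoid E) : hkP E s * (hkGen E k * t) = hkP E s * t := by
  obtain ⟨a, b, rfl⟩ := List.append_of_mem hk
  have hb : ∀ m ∈ b, k ≤ m := by
    have h1 := (List.pairwise_append.mp hs).2.1
    exact fun m hm => (List.pairwise_cons.mp h1).1 m hm |>.le
  have h := minPull hacyc k b hb t
  simp only [hkP_append, hkP_cons, mul_assoc]
  rw [h]

/-- absorption of any word over the support on the right of a strictly sorted word -/
lemma absorb_list {s : List (Fin n)} (hs : s.Pairwise (· < ·)) :
    ∀ l : List (Fin n), (∀ k ∈ l, k ∈ s) → ∀ t : HKmonoid E,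
      hkP E s * (hkP E l * t) = hkP E s * t := by
  intro l
  induction l with
  | nil => intro _ t; simp
  | cons k l ih =>
    intro hmem t
    have h1 : k ∈ s := hmem k (by simp)
    have h2 : ∀ m ∈ l, m ∈ s := fun m hm => hmem m (by simp [hm])
    simp only [hkP_cons, mul_assoc]
    rw [absorb_gen hacyc hs h1 (hkP E l * t), ih h2 t]

lemma absorb_list' {s : List (Fin n)} (hs : s.Pairwise (· < ·))
    (l : List (Fin n)) (hmem : ∀ k ∈ l, k ∈ s) :
    hkP E s * hkP E l = hkP E s := by
  have := absorb_list hacyc hs l hmem 1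
  simpa using this

end Acyclic

lemma exists_last_split {j : Fin n} :
    ∀ w : List (Fin n), j ∈ w → ∃ a b, w = a ++ j :: b ∧ j ∉ b := by
  intro w
  induction w using List.reverseRecOn with
  | nil => intro h; simp at h
  | append_singleton l k ih =>
    intro h
    by_cases hjk : j = k
    · exact ⟨l, [], by simp [hjk], by simp⟩
    · have hj : j ∈ l := by
        rcases List.mem_append.mp h with h' | h'
        · exact h'
        · simp at h'; exact absurd h' hjk
      obtain ⟨a, b, heq, hb⟩ := ih hj
      exact ⟨a, b ++ [k], by simp [heq], by simp [hb, hjk]⟩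

lemma sort_insert_max {X : Finset (Fin n)} {j : Fin n} (hj : ∀ y ∈ X, y < j)
    (hjX : j ∉ X) :
    (insert j X).sort (· ≤ ·) = X.sort (· ≤ ·) ++ [j] := by
  refine (fun hp hs => List.Perm.eq_of_pairwise' (Finset.pairwise_sort _ _) hs hp) ?_ ?_
  · exact (Finset.sort_perm_toList _ _).trans ((Finset.toList_insert hjX).trans
      (((Finset.sort_perm_toList _ _).symm.cons j).trans
        (List.perm_append_singleton _ _).symm))
  · refine List.pairwise_append.mpr ⟨Finset.pairwise_sort _ _, List.pairwise_singleton _ _, ?_⟩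
    intro a ha b hb
    rw [List.mem_singleton] at hb
    subst hb
    exact (hj a (by simpa using ha)).le

lemma hkIdemElt_empty : hkIdemElt E (∅ : Finset (Fin n)) = 1 := by
  rw [hkIdemElt_eq, Finset.sort_empty, hkP_nil]

lemma toFinset_split (a b : List (Fin n)) (j : Fin n) :
    (a ++ j :: b).toFinset = insert j (a ++ b).toFinset := by
  ext x
  simp [or_left_comm]

lemma pow_reaches (hacyc : ∀ i j : Fin n, E i j → i < j) :
    ∀ (m : ℕ) (w : List (Fin n)), w.length ≤ m →
      ∃ N : ℕ, (hkP E w) ^ (N + 1) = hkIdemElt E w.toFinset := by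
  intro m
  induction m with
  | zero =>
    intro w hw
    have : w = [] := List.eq_nil_of_length_eq_zero (Nat.le_zero.mp hw)
    subst this
    exact ⟨0, by simp [hkIdemElt_empty]⟩
  | succ m ih =>
    intro w hw
    by_cases hne : w = []
    · subst hne
      exact ⟨0, by simp [hkIdemElt_empty]⟩
    · have hWne : w.toFinset.Nonempty := by
        rcases w with _ | ⟨x, w'⟩
        · exact absurd rfl hne
        · exact ⟨x, by simp⟩
      set j := w.toFinset.max' hWne with hj
      have hjmem : j ∈ w := List.mem_toFinset.mp (w.toFinset.max'_mem hWne)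
      have hjmax : ∀ k ∈ w, k ≤ j := fun k hk =>
        Finset.le_max' _ _ (List.mem_toFinset.mpr hk)
      obtain ⟨a, b, hw_eq, hjb⟩ := exists_last_split w hjmem
      -- key step : w² = (a++b) · w
      have hba : ∀ k ∈ b ++ a, k ≤ j := by
        intro k hk
        apply hjmax
        rw [hw_eq]
        rcases List.mem_append.mp hk with h | h
        · simp [h]
        · simp [h]
      have key : hkP E w * hkP E w = hkP E (a ++ b) * hkP E w := by
        have h := maxPush hacyc j (b ++ a) hba (hkP E b)
        simp only [hkP_append, mul_assoc] at h
        rw [hw_eq]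
        simp only [hkP_append, hkP_cons, mul_assoc]
        rw [h]
      have powkey : ∀ k : ℕ, (hkP E w) ^ (k + 1) = (hkP E (a ++ b)) ^ k * hkP E w := by
        intro k
        induction k with
        | zero => simp
        | succ k ihk =>
          rw [pow_succ, ihk, mul_assoc, key, ← mul_assoc, ← pow_succ]
      have hlen : (a ++ b).length ≤ m := by
        have : w.length = a.length + b.length + 1 := by simp [hw_eq]; omega
        simp only [List.length_append]
        omega
      obtain ⟨M, hM⟩ := ih (a ++ b) hlen
      refine ⟨M + 1, ?_⟩
      have : (hkP E w) ^ (M + 1 + 1) = hkIdemElt E (a ++ b).toFinset * hkP E w := by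
        rw [powkey (M + 1), ← hM]
      rw [this, hw_eq]
      -- now absorb
      set Y := (a ++ b).toFinset with hY
      have hsY : (Y.sort (· ≤ ·)).Pairwise (· < ·) := (Finset.sortedLT_sort _).pairwise
      have hmema : ∀ k ∈ a, k ∈ Y.sort (· ≤ ·) := by
        intro k hk
        rw [Finset.mem_sort]
        simp [hY, hk]
      have habs_a : ∀ t : HKmonoid E, hkIdemElt E Y * (hkP E a * t) = hkIdemElt E Y * t := by
        intro t
        rw [hkIdemElt_eq]
        exact absorb_list hacyc hsY a hmema t
      simp only [hkP_append, hkP_cons, mul_assoc]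
      rw [habs_a (hkGen E j * hkP E b)]
      by_cases hjY : j ∈ Y
      · -- X = Y
        have hX : (a ++ j :: b).toFinset = Y := by
          rw [toFinset_split, ← hY, Finset.insert_eq_self.mpr hjY]
        rw [hX, hkIdemElt_eq]
        rw [absorb_gen hacyc hsY ((Finset.mem_sort _).mpr hjY) (hkP E b)]
        exact absorb_list' hacyc hsY b (by
          intro k hk
          rw [Finset.mem_sort]
          simp [hY, hk])
      · -- X = insert j Y
        have hX : (a ++ j :: b).toFinset = insert j Y := by rw [toFinset_split, hY]
        have hylt : ∀ y ∈ Y, y < j := by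
          intro y hy
          have hle : y ≤ j := by
            apply hjmax
            rw [hw_eq]
            have hmem := List.mem_toFinset.mp (hY ▸ hy)
            rcases List.mem_append.mp hmem with h | h
            · exact List.mem_append.mpr (Or.inl h)
            · simp [h]
          exact lt_of_le_of_ne hle (fun h => hjY (h ▸ hy))
        have hsort : (insert j Y).sort (· ≤ ·) = Y.sort (· ≤ ·) ++ [j] :=
          sort_insert_max hylt hjY
        have heX : hkIdemElt E (insert j Y) = hkIdemElt E Y * hkGen E j := by
          rw [hkIdemElt_eq, hsort, hkP_append, hkP_cons, hkP_nil, mul_one, hkIdemElt_eq]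
        have hsX : ((insert j Y).sort (· ≤ ·)).Pairwise (· < ·) := (Finset.sortedLT_sort _).pairwise
        rw [hX]
        calc hkIdemElt E Y * (hkGen E j * hkP E b)
            = (hkIdemElt E Y * hkGen E j) * hkP E b := (mul_assoc _ _ _).symm
          _ = hkIdemElt E (insert j Y) * hkP E b := by rw [← heX]
          _ = hkIdemElt E (insert j Y) := by
              rw [hkIdemElt_eq]
              refine absorb_list' hacyc hsX b ?_
              intro k hk
              rw [Finset.mem_sort]
              exact Finset.mem_insert_of_mem (by simp [hY, hk])

lemma mk'_eq_hkP (x : FreeMonoid (Fin n)) :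
    (conGen (hkRel E)).mk' x = hkP E (FreeMonoid.toList x) := by
  induction x using FreeMonoid.recOn with
  | one => simp [hkP]; rfl
  | of_mul i x ihx =>
    rw [map_mul, ihx, FreeMonoid.toList_of_mul, hkP_cons]
    rfl

lemma exists_word (m : HKmonoid E) : ∃ w : List (Fin n), m = hkP E w := by
  obtain ⟨x, hx⟩ := Con.mk'_surjective (c := conGen (hkRel E)) m
  exact ⟨FreeMonoid.toList x, by rw [← hx, mk'_eq_hkP]⟩

lemma hkIdemElt_idem (hacyc : ∀ i j : Fin n, E i j → i < j) (X : Finset (Fin n)) :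
    IsIdempotentElem (hkIdemElt E X) := by
  show hkIdemElt E X * hkIdemElt E X = hkIdemElt E X
  rw [hkIdemElt_eq]
  exact absorb_list' hacyc ((Finset.sortedLT_sort _).pairwise) _ (fun k hk => hk)

/-- the content homomorphism -/
def finsetCM : CommMonoid (Finset (Fin n)) where
  mul := (· ∪ ·)
  one := ∅
  mul_assoc := Finset.union_assoc
  one_mul := Finset.empty_union
  mul_one := Finset.union_empty
  mul_comm := Finset.union_comm

attribute [local instance] finsetCM

lemma fmul_def (s t : Finset (Fin n)) : s * t = s ∪ t := rfl
lemma fone_def : (1 : Finset (Fin n)) = ∅ := rfl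

lemma content_le :
    conGen (hkRel E) ≤ Con.ker (FreeMonoid.lift fun i => ({i} : Finset (Fin n))) := by
  refine Con.conGen_le.mpr ?_
  intro w₁ w₂ h
  rw [Con.ker_rel]
  rcases h with ⟨i, h1, h2⟩ | ⟨i, j, _, _, _, h1, h2⟩ | ⟨i, j, _, (⟨h1, h2⟩ | ⟨h1, h2⟩)⟩ <;>
    subst h1 <;> subst h2 <;>
    simp only [map_mul, FreeMonoid.lift_eval_of, fmul_def] <;>
    (ext x) <;> simp <;> tauto

def contentHom : HKmonoid E →* Finset (Fin n) :=
  Con.lift _ _ content_le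

lemma contentHom_gen (i : Fin n) : contentHom (hkGen E i) = {i} :=
  Con.lift_mk' content_le (FreeMonoid.of i)

lemma contentHom_hkP (l : List (Fin n)) : contentHom (hkP E l) = l.toFinset := by
  induction l with
  | nil => simp [hkP, fone_def]
  | cons a l ih =>
    rw [hkP_cons, map_mul, contentHom_gen, ih, fmul_def, List.toFinset_cons,
      Finset.insert_eq]

lemma contentHom_hkIdemElt (X : Finset (Fin n)) :
    contentHom (hkIdemElt E X) = X := by
  rw [hkIdemElt_eq, contentHom_hkP, Finset.sort_toFinset]

lemma hkIdemElt_injective : Function.Injective (hkIdemElt E) := by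
  intro X Y h
  have := congrArg (contentHom (E := E)) h
  rwa [contentHom_hkIdemElt, contentHom_hkIdemElt] at this

lemma pow_succ_eq_self {M : Type*} [Monoid M] {m : M} (hm : m * m = m) :
    ∀ N : ℕ, m ^ (N + 1) = m := by
  intro N
  induction N with
  | zero => simp
  | succ N ih => rw [pow_succ, ih, hm]

end HKaux

/-- for an acyclic graph with `i → j ⟹ i < j`, the idempotents of `HK_Γ`
are exactly the `2^n` pairwise distinct elements `e_X`, `X ⊆ {1,…,n}`. -/
theorem hk_idempotents_eq_eX {n : ℕ} (E : Fin n → Fin n → Prop)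
    (hacyc : ∀ i j : Fin n, E i j → i < j) :
    Function.Injective (hkIdemElt E) ∧
    (∀ m : HKmonoid E, IsIdempotentElem m ↔ ∃ X : Finset (Fin n), m = hkIdemElt E X) ∧
    Set.ncard {m : HKmonoid E | IsIdempotentElem m} = 2 ^ n := by
  have hiff : ∀ m : HKmonoid E, IsIdempotentElem m ↔ ∃ X, m = hkIdemElt E X := by
    intro m
    constructor
    · intro hm
      obtain ⟨w, rfl⟩ := HKaux.exists_word m
      obtain ⟨N, hN⟩ := HKaux.pow_reaches hacyc w.length w le_rfl
      exact ⟨w.toFinset, by rw [← hN, HKaux.pow_succ_eq_self hm N]⟩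
    · rintro ⟨X, rfl⟩
      exact HKaux.hkIdemElt_idem hacyc X
  refine ⟨HKaux.hkIdemElt_injective, hiff, ?_⟩
  have hset : {m : HKmonoid E | IsIdempotentElem m} = Set.range (hkIdemElt E) := by
    ext m
    simp only [Set.mem_setOf_eq, Set.mem_range, hiff m]
    exact exists_congr fun X => eq_comm
  rw [hset, ← Nat.card_coe_set_eq,
    Nat.card_range_of_injective HKaux.hkIdemElt_injective, Nat.card_eq_fintype_card,
    Fintype.card_finset, Fintype.card_fin]
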